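/- arXiv:2412.18471 — 2 statements merged into one kernel-verified Lean document; each statement's English description precedes it below -/
import Mathlib

section
/- Fix an integer n ≥ 3. The coefficients α_{j,i} satisfy the closed form α_{n−2,i} = (−1)^i (i+1)(i+2)/2 for all i = 0, …, n−3. -/
open Matrix

/-- The coefficients `α_{j,i}` (`j` is 1-based) for fixed order `n`, defined by the
recursion `α_{j,0} = 1`, `α_{n,i} = (-1)^i`, `α_{j,i} = α_{j+1,i} - α_{j,i-1}`. -/
def alphaCoef (n : ℕ) (j i : ℕ) : ℤ :=
  if n ≤ j then (-1) ^ i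
  else if i = 0 then 1
  else alphaCoef n (j + 1) i - alphaCoef n j (i - 1)
termination_by (n - j, i)
decreasing_by
  · apply Prod.Lex.left; omega
  · apply Prod.Lex.right' <;> omega

/-- The modulating-function-based transformation matrix `T_n(μ(t))`, whose (1-based)
`(j,k)` entry is `α_{j,j-k} μ^{(j-k)}(t)` for `k ≤ j` and `0` otherwise. -/
noncomputable def Tmat (n : ℕ) (μ : ℝ → ℝ) (t : ℝ) : Matrix (Fin n) (Fin n) ℝ :=
  Matrix.of fun j k : Fin n =>
    if (k : ℕ) ≤ (j : ℕ) then
      (alphaCoef n ((j : ℕ) + 1) ((j : ℕ) - (k : ℕ)) : ℝ) * iteratedDeriv ((j : ℕ) - (k : ℕ)) μ t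
    else 0

/-- `T_n(μ^{(1)}(t))`: the matrix obtained from `T_n` by shifting all derivative
orders up by one; its (1-based) `(j,k)` entry is `α_{j,j-k} μ^{(j-k+1)}(t)` for `k ≤ j`. -/
noncomputable def TmatShift (n : ℕ) (μ : ℝ → ℝ) (t : ℝ) : Matrix (Fin n) (Fin n) ℝ :=
  Matrix.of fun j k : Fin n =>
    if (k : ℕ) ≤ (j : ℕ) then
      (alphaCoef n ((j : ℕ) + 1) ((j : ℕ) - (k : ℕ)) : ℝ) * iteratedDeriv ((j : ℕ) - (k : ℕ) + 1) μ t
    else 0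

/-- The Brunovsky (nilpotent shift) matrix `A`: ones on the superdiagonal, zeros elsewhere. -/
def Amat (n : ℕ) : Matrix (Fin n) (Fin n) ℝ :=
  Matrix.of fun j k : Fin n => if (k : ℕ) = (j : ℕ) + 1 then 1 else 0

/-- First standard basis vector `e₁` of `ℝⁿ`. -/
def e1vec (n : ℕ) : Fin n → ℝ := fun k => if (k : ℕ) = 0 then 1 else 0

/-- Last standard basis vector `B₀ = (0,…,0,1)ᵀ` of `ℝⁿ`. -/
def B0vec (n : ℕ) : Fin n → ℝ := fun k => if (k : ℕ) = n - 1 then 1 else 0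

/-- The vector `B_α(t)` whose (1-based) `j`-th entry is `(-1)^(j-1) C(n,j) μ^{(j)}(t)`. -/
noncomputable def Balpha (n : ℕ) (μ : ℝ → ℝ) (t : ℝ) : Fin n → ℝ :=
  fun j => (-1 : ℝ) ^ (j : ℕ) * (n.choose ((j : ℕ) + 1)) * iteratedDeriv ((j : ℕ) + 1) μ t

lemma alphaCoef_pred' (n : ℕ) (hn : 2 ≤ n) :
    ∀ i, alphaCoef n (n - 1) i = (-1) ^ i * (i + 1 : ℤ) := by
  intro i
  induction i with
  | zero =>
    rw [alphaCoef]
    simp [show ¬ n ≤ n - 1 by omega]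
  | succ i ih =>
    rw [alphaCoef]
    simp only [show ¬ n ≤ n - 1 by omega, if_false, show i + 1 ≠ 0 by omega, if_false,
      Nat.add_sub_cancel, show n - 1 + 1 = n by omega, ih]
    rw [alphaCoef]
    simp only [le_refl, if_true]
    push_cast
    ring

/-- for `n ≥ 3`, `α_{n-2,i} = (-1)^i (i+1)(i+2)/2` for all `i = 0, …, n-3`
(the division is exact since `(i+1)(i+2)` is even). -/
theorem alphaCoef_pred_pred (n : ℕ) (hn : 3 ≤ n) :
    ∀ i ≤ n - 3, alphaCoef n (n - 2) i = (-1) ^ i * (((i + 1) * (i + 2) / 2 : ℕ) : ℤ) := by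
  have key : ∀ i, alphaCoef n (n - 2) i = (-1) ^ i * (((i + 1) * (i + 2) / 2 : ℕ) : ℤ) := by
    intro i
    induction i with
    | zero =>
      rw [alphaCoef]
      simp [show ¬ n ≤ n - 2 by omega]
    | succ i ih =>
      rw [alphaCoef]
      simp only [show ¬ n ≤ n - 2 by omega, if_false, show i + 1 ≠ 0 by omega, if_false,
        Nat.add_sub_cancel, show n - 2 + 1 = n - 1 by omega, ih,
        alphaCoef_pred' n (by omega)]
      have h1 : (i + 1 + 1) * (i + 1 + 2) / 2 = (i + 2) + (i + 1) * (i + 2) / 2 := by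
        have h2 : (i + 1) * (i + 2) = 2 * ((i + 1) * (i + 2) / 2) :=
          (Nat.two_mul_div_two_of_even (Nat.even_mul_succ_self (i + 1))).symm
        have h3 : (i + 1 + 1) * (i + 1 + 2) = 2 * ((i + 1 + 1) * (i + 1 + 2) / 2) :=
          (Nat.two_mul_div_two_of_even (Nat.even_mul_succ_self (i + 2))).symm
        have h4 : (i + 1 + 1) * (i + 1 + 2) = (i + 1) * (i + 2) + 2 * (i + 2) := by ring
        omega
      rw [h1]
      push_cast
      ring
  intro i _
  exact key i
end

section
/- Fix an integer n ≥ 1. Denoting by α^{(n)}_{j,i} the coefficients of order n and by α^{(n+1)}_{j,i} those of order n+1, one has α^{(n+1)}_{j+1,i} = α^{(n)}_{j,i} for all 1 ≤ j ≤ n and 0 ≤ i ≤ j−1. Consequently, in passing from T_n to T_{n+1} only the coefficients of the first column (the α^{(n+1)}_{j,j−1}) are new, while all other coefficients agree with those of T_n. -/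
open Matrix

lemma alphaCoef_ge (n j i : ℕ) (h : n ≤ j) : alphaCoef n j i = (-1) ^ i := by
  rw [alphaCoef]; simp [h]

lemma alphaCoef_zero (n j : ℕ) (h : j < n) : alphaCoef n j 0 = 1 := by
  rw [alphaCoef]; simp [Nat.not_le.2 h]

lemma alphaCoef_rec (n j i : ℕ) (h : j < n) (hi : i ≠ 0) :
    alphaCoef n j i = alphaCoef n (j + 1) i - alphaCoef n j (i - 1) := by
  conv_lhs => rw [alphaCoef]
  rw [if_neg (by omega), if_neg hi]

/-- the coefficients of order `n+1` satisfy `α^{(n+1)}_{j+1,i} = α^{(n)}_{j,i}`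
for all `1 ≤ j ≤ n`, `0 ≤ i ≤ j-1`: passing from `T_n` to `T_{n+1}`, only the first-column
coefficients `α^{(n+1)}_{j,j-1}` are new, all other coefficients agree with those of `T_n`. -/
theorem alphaCoef_succ_order (n : ℕ) (hn : 1 ≤ n) :
    ∀ j i : ℕ, 1 ≤ j → j ≤ n → i ≤ j - 1 →
      alphaCoef (n + 1) (j + 1) i = alphaCoef n j i := by
  suffices h : ∀ k j i, n - j = k → 1 ≤ j → j ≤ n → i ≤ j - 1 →
      alphaCoef (n + 1) (j + 1) i = alphaCoef n j i by
    intro j i hj hjn hi; exact h (n - j) j i rfl hj hjn hi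
  intro k
  induction k with
  | zero =>
    intro j i hk hj hjn hi
    have hj' : j = n := by omega
    subst hj'
    rw [alphaCoef_ge _ _ _ (by omega), alphaCoef_ge _ _ _ (by omega)]
  | succ k ih =>
    intro j i hk hj hjn hi
    have hjlt : j < n := by omega
    revert hi
    induction i using Nat.strong_induction_on with
    | _ i ihi =>
      intro hi
      rcases Nat.eq_zero_or_pos i with h0 | h0
      · subst h0
        rw [alphaCoef_zero _ _ (by omega), alphaCoef_zero _ _ (by omega)]
      · rw [alphaCoef_rec (n + 1) (j + 1) i (by omega) (by omega),
            alphaCoef_rec n j i (by omega) (by omega),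
            ih (j + 1) i (by omega) (by omega) (by omega) (by omega),
            ihi (i - 1) (by omega) (by omega)]
end
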